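/- Suppose σ* maximizes P(Y*(σ)) among all σ ∈ ℝ^n with σ_i ≥ 0 and Σ_i σ_i ≤ 1 (the success probability objective). Then diag(σ*)·G maximizes the spectral radius among all such feasible allocations: for every σ ∈ ℝ^n with σ_i ≥ 0 and Σ_i σ_i ≤ 1, the spectral radius ρ(diag(σ)·G) is at most ρ(diag(σ*)·G). -/

import Mathlib

open Matrix

/-- The equilibrium conditions: `a` is nonnegative, solves
`(I − P'(Y)·β·diag(σ)·G)·a = P'(Y)·σ`, and `Y = Y(a)`. -/
def eqmCond {n : ℕ} (G : Matrix (Fin n) (Fin n) ℝ) (β : ℝ) (P : ℝ → ℝ)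
    (σ a : Fin n → ℝ) (Y : ℝ) : Prop :=
  (∀ i, 0 ≤ a i) ∧
  ((1 : Matrix (Fin n) (Fin n) ℝ)
      - (deriv P Y * β) • (Matrix.diagonal σ * G)).mulVec a = deriv P Y • σ ∧
  Y = ∑ i, a i + β / 2 * ∑ i, ∑ j, G i j * a i * a j

/-- The spectral radius of a real matrix: the largest modulus of a (complex) eigenvalue. -/
noncomputable def matrixSpectralRadius {n : ℕ} (M : Matrix (Fin n) (Fin n) ℝ) : ENNReal :=
  spectralRadius ℂ (M.map (Complex.ofReal))

lemma s12_deriv_pos (P : ℝ → ℝ) (hP_mono : StrictMonoOn P (Set.Ici (0:ℝ)))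
    (hP_conc : ConcaveOn ℝ (Set.Ici (0:ℝ)) P)
    (hP_diff : ∀ y : ℝ, 0 ≤ y → DifferentiableAt ℝ P y) :
    ∀ y : ℝ, 0 ≤ y → 0 < deriv P y := by
  intro y hy
  have hy1 : (0:ℝ) ≤ y + 1 := by linarith
  have hlt : y < y + 1 := by linarith
  have hs := hP_conc.slope_le_deriv (Set.mem_Ici.2 hy) (Set.mem_Ici.2 hy1) hlt (hP_diff y hy)
  have hP : P y < P (y+1) := hP_mono (Set.mem_Ici.2 hy) (Set.mem_Ici.2 hy1) hlt
  rw [slope_def_field] at hs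
  have : (P (y+1) - P y) / (y + 1 - y) = P (y+1) - P y := by
    simp
  rw [this] at hs
  linarith

lemma s12_rayleigh {n : ℕ} [Nonempty (Fin n)] (S : Matrix (Fin n) (Fin n) ℝ)
    (hsym : ∀ i j, S i j = S j i) (hnn : ∀ i j, 0 ≤ S i j) :
    ∃ (r : ℝ) (w : Fin n → ℝ), 0 ≤ r ∧ (∀ i, 0 ≤ w i) ∧ (∑ i, (w i)^2 = 1) ∧
      (∀ i, ∑ j, S i j * w j = r * w i) ∧
      (∀ x : Fin n → ℝ, (∑ i, ∑ j, S i j * x i * x j) ≤ r * ∑ i, (x i)^2) := by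
  classical
  set Q : (Fin n → ℝ) → ℝ := fun x => ∑ i, ∑ j, S i j * x i * x j with hQ
  have hQcont : Continuous Q := by
    apply continuous_finset_sum
    intro i _
    apply continuous_finset_sum
    intro j _
    exact ((continuous_const.mul (continuous_apply i)).mul (continuous_apply j))
  set K : Set (Fin n → ℝ) := {x | ∑ i, (x i)^2 = 1} with hK
  have hKclosed : IsClosed K := by
    apply isClosed_eq _ continuous_const
    exact continuous_finset_sum _ (fun i _ => (continuous_apply i).pow 2)
  have hKsub : K ⊆ Metric.closedBall 0 1 := by
    intro x hx
    rw [Metric.mem_closedBall, dist_zero_right]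
    rw [pi_norm_le_iff_of_nonneg (by norm_num)]
    intro i
    have h1 : (x i)^2 ≤ 1 := by
      have := Finset.single_le_sum (f := fun i => (x i)^2)
        (fun j _ => sq_nonneg (x j)) (Finset.mem_univ i)
      rw [hx] at this; exact this
    rw [Real.norm_eq_abs]
    nlinarith [abs_nonneg (x i), sq_abs (x i)]
  have hKcompact : IsCompact K :=
    (isCompact_closedBall 0 1).of_isClosed_subset hKclosed hKsub
  have hKne : K.Nonempty := by
    refine ⟨Pi.single (Classical.arbitrary (Fin n)) 1, ?_⟩
    simp [hK, Pi.single_apply]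
  obtain ⟨x₀, hx₀K, hmax₀⟩ := hKcompact.exists_isMaxOn hKne hQcont.continuousOn
  set w : Fin n → ℝ := fun i => |x₀ i| with hw
  have hwnn : ∀ i, 0 ≤ w i := fun i => abs_nonneg _
  have hwK : w ∈ K := by
    simpa [hK, hw, sq_abs] using hx₀K
  have hQw : Q x₀ ≤ Q w := by
    apply Finset.sum_le_sum; intro i _
    apply Finset.sum_le_sum; intro j _
    calc S i j * x₀ i * x₀ j ≤ |S i j * x₀ i * x₀ j| := le_abs_self _
    _ = S i j * |x₀ i| * |x₀ j| := by
        rw [abs_mul, abs_mul, abs_of_nonneg (hnn i j)]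
  have hmax : ∀ x ∈ K, Q x ≤ Q w := by
    intro x hx
    exact le_trans (hmax₀ hx) hQw
  set r : ℝ := Q w with hr
  have hrnn : 0 ≤ r := by
    apply Finset.sum_nonneg; intro i _
    apply Finset.sum_nonneg; intro j _
    exact mul_nonneg (mul_nonneg (hnn i j) (hwnn i)) (hwnn j)
  have hQsmul : ∀ (t : ℝ) (x : Fin n → ℝ), Q (t • x) = t^2 * Q x := by
    intro t x
    simp only [hQ, Pi.smul_apply, smul_eq_mul, Finset.mul_sum]
    apply Finset.sum_congr rfl; intro i _
    apply Finset.sum_congr rfl; intro j _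
    ring
  have hbound : ∀ x : Fin n → ℝ, Q x ≤ r * ∑ i, (x i)^2 := by
    intro x
    rcases eq_or_lt_of_le (Finset.sum_nonneg (fun i (_ : i ∈ Finset.univ) => sq_nonneg (x i)))
      with hs | hs
    · have hx0 : ∀ i, x i = 0 := by
        intro i
        have := (Finset.sum_eq_zero_iff_of_nonneg
          (fun j (_ : j ∈ Finset.univ) => sq_nonneg (x j))).1 hs.symm i (Finset.mem_univ i)
        exact pow_eq_zero_iff (by norm_num) |>.1 this
      have : Q x = 0 := by
        apply Finset.sum_eq_zero; intro i _
        apply Finset.sum_eq_zero; intro j _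
        rw [hx0 i]; ring
      rw [this, ← hs]
      simp
    · set s := ∑ i, (x i)^2 with hsdef
      have hsq : (Real.sqrt s)⁻¹ ^ 2 = s⁻¹ := by
        rw [← Real.sqrt_inv]
        exact Real.sq_sqrt (inv_nonneg.2 hs.le)
      have hmem : (Real.sqrt s)⁻¹ • x ∈ K := by
        have : ∑ i, (((Real.sqrt s)⁻¹ • x) i)^2 = (Real.sqrt s)⁻¹^2 * s := by
          rw [Finset.mul_sum]
          apply Finset.sum_congr rfl; intro i _
          simp [mul_pow]
        simp only [hK, Set.mem_setOf_eq, this, hsq]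
        field_simp
      have := hmax _ hmem
      rw [hQsmul, hsq] at this
      calc Q x = s * (s⁻¹ * Q x) := by field_simp
      _ ≤ s * r := by
          apply mul_le_mul_of_nonneg_left this hs.le
      _ = r * s := by ring
  have hp : ∀ y : Fin n → ℝ,
      (∑ i, y i * (∑ j, S i j * w j)) - r * (∑ i, y i * w i) = 0 := by
    intro y
    set A := ∑ i, y i * (∑ j, S i j * w j) with hA
    set p := A - r * (∑ i, y i * w i) with hpdef
    set κ := Q y - r * ∑ i, (y i)^2 with hκ
    have hswap : ∑ i, ∑ j, S i j * w i * y j = A := by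
      rw [Finset.sum_comm, hA]
      apply Finset.sum_congr rfl; intro j _
      rw [Finset.mul_sum]
      apply Finset.sum_congr rfl; intro i _
      rw [hsym i j]; ring
    have hN : ∀ t : ℝ, 2*t*p + t^2*κ ≤ 0 := by
      intro t
      have hexp : Q (w + t • y) = r + 2*t*A + t^2 * Q y := by
        have h1 : Q (w + t • y)
            = ∑ i, ∑ j, (S i j * w i * w j + t*(S i j * w i * y j)
              + t*(S i j * y i * w j) + t^2*(S i j * y i * y j)) := by
          apply Finset.sum_congr rfl; intro i _
          apply Finset.sum_congr rfl; intro j _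
          simp only [Pi.add_apply, Pi.smul_apply, smul_eq_mul]
          ring
        rw [h1]
        simp only [Finset.sum_add_distrib, ← Finset.mul_sum]
        rw [hswap]
        have h2 : ∑ i, ∑ j, S i j * y i * w j = A := by
          rw [hA]
          apply Finset.sum_congr rfl; intro i _
          rw [Finset.mul_sum]
          apply Finset.sum_congr rfl; intro j _
          ring
        rw [h2, hr]
        ring
      have hsum : ∑ i, ((w + t • y) i)^2 = 1 + 2*t*(∑ i, y i * w i) + t^2 * ∑ i, (y i)^2 := by
        have h1 : ∑ i, ((w + t • y) i)^2
            = ∑ i, ((w i)^2 + 2*t*(y i * w i) + t^2 * (y i)^2) := by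
          apply Finset.sum_congr rfl; intro i _
          simp only [Pi.add_apply, Pi.smul_apply, smul_eq_mul]
          ring
        rw [h1]
        simp only [Finset.sum_add_distrib, ← Finset.mul_sum]
        rw [hwK]
      have := hbound (w + t • y)
      rw [hexp, hsum] at this
      rw [hpdef, hκ]
      ring_nf
      ring_nf at this
      linarith
    have hδpos : (0:ℝ) < (|κ| + 1)⁻¹ := by positivity
    set δ := (|κ| + 1)⁻¹ with hδ
    have hδκ : δ * |κ| ≤ 1 := by
      rw [hδ]
      rw [inv_mul_le_iff₀ (by positivity)]
      linarith [abs_nonneg κ]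
    have := hN (p * δ)
    have hple : p^2 * δ ≤ 0 := by
      have h2 : 2*(p*δ)*p + (p*δ)^2*κ ≥ p^2*δ := by
        have hκge : κ ≥ -|κ| := neg_abs_le κ
        have h3 : (p*δ)^2*κ ≥ -(p^2*δ^2*|κ|) := by nlinarith [sq_nonneg (p*δ)]
        have h4 : p^2*δ^2*|κ| ≤ p^2*δ := by
          have : δ^2*|κ| ≤ δ := by
            calc δ^2*|κ| = δ * (δ * |κ|) := by ring
            _ ≤ δ * 1 := by
                apply mul_le_mul_of_nonneg_left hδκ hδpos.le
            _ = δ := by ring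
          nlinarith [sq_nonneg p]
        nlinarith
      linarith
    have hp2 : p^2 ≤ 0 := by
      by_contra hc
      push_neg at hc
      nlinarith
    have : p = 0 := by nlinarith [sq_nonneg p]
    rw [hpdef] at this
    linarith [this]
  refine ⟨r, w, hrnn, hwnn, hwK, ?_, hbound⟩
  intro i
  have := hp (Pi.single (M := fun _ : Fin n => ℝ) i 1)
  have h1 : ∑ k, Pi.single (M := fun _ : Fin n => ℝ) i 1 k * (∑ j, S k j * w j) = ∑ j, S i j * w j := by
    rw [Finset.sum_eq_single i]
    · simp
    · intro b _ hb; simp [Pi.single_apply, hb]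
    · intro h; exact absurd (Finset.mem_univ i) h
  have h2 : ∑ k, Pi.single (M := fun _ : Fin n => ℝ) i 1 k * w k = w i := by
    rw [Finset.sum_eq_single i]
    · simp
    · intro b _ hb; simp [Pi.single_apply, hb]
    · intro h; exact absurd (Finset.mem_univ i) h
  rw [h1, h2] at this
  linarith

lemma s12_expand {n : ℕ} (S : Matrix (Fin n) (Fin n) ℝ)
    (hsym : ∀ i j, S i j = S j i) (a b : Fin n → ℝ) (t : ℝ) :
    ∑ i, ∑ j, S i j * (a i + t * b i) * (a j + t * b j)
      = (∑ i, ∑ j, S i j * a i * a j) + 2*t*(∑ i, b i * ∑ j, S i j * a j)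
        + t^2 * ∑ i, ∑ j, S i j * b i * b j := by
  have h1 : ∑ i, ∑ j, S i j * (a i + t * b i) * (a j + t * b j)
      = ∑ i, ∑ j, (S i j * a i * a j + t*(S i j * a i * b j)
        + t*(S i j * b i * a j) + t^2*(S i j * b i * b j)) := by
    apply Finset.sum_congr rfl; intro i _
    apply Finset.sum_congr rfl; intro j _
    ring
  rw [h1]
  simp only [Finset.sum_add_distrib, ← Finset.mul_sum]
  have hswap : ∑ i, ∑ j, S i j * a i * b j = ∑ i, b i * ∑ j, S i j * a j := by
    rw [Finset.sum_comm]
    apply Finset.sum_congr rfl; intro j _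
    rw [Finset.mul_sum]
    apply Finset.sum_congr rfl; intro i _
    rw [hsym i j]; ring
  have h2 : ∑ i, ∑ j, S i j * b i * a j = ∑ i, b i * ∑ j, S i j * a j := by
    apply Finset.sum_congr rfl; intro i _
    rw [Finset.mul_sum]
    apply Finset.sum_congr rfl; intro j _
    ring
  rw [hswap, h2]
  ring

lemma s12_scale {n : ℕ} (S : Matrix (Fin n) (Fin n) ℝ) (t : ℝ) (x : Fin n → ℝ) :
    ∑ i, ∑ j, S i j * (t * x i) * (t * x j) = t^2 * ∑ i, ∑ j, S i j * x i * x j := by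
  rw [Finset.mul_sum]
  apply Finset.sum_congr rfl; intro i _
  rw [Finset.mul_sum]
  apply Finset.sum_congr rfl; intro j _
  ring

lemma s12_sum_two {n : ℕ} {i j : Fin n} (hij : i ≠ j) (f : Fin n → ℝ)
    (h : ∀ k, k ≠ i → k ≠ j → f k = 0) : ∑ k, f k = f i + f j := by
  rw [← Finset.sum_pair hij]
  apply (Finset.sum_subset (Finset.subset_univ _) ?_).symm
  intro k _ hk
  simp only [Finset.mem_insert, Finset.mem_singleton, not_or] at hk
  exact h k hk.1 hk.2

lemma s12_quadMax {n : ℕ} [Nonempty (Fin n)] (G : Matrix (Fin n) (Fin n) ℝ)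
    (hsym : ∀ i j, G i j = G j i) (hnn : ∀ i j, 0 ≤ G i j) (hdiag : ∀ i, G i i = 0)
    (hex : ∃ i j, 0 < G i j) :
    ∃ u : Fin n → ℝ, (∀ i, 0 ≤ u i) ∧ (∑ i, u i = 1) ∧
      0 < (∑ i, ∑ j, G i j * u i * u j) ∧
      (∀ i, 0 < u i → ∑ j, G i j * u j = ∑ k, ∑ j, G k j * u k * u j) ∧
      (∀ v : Fin n → ℝ, (∀ i, 0 ≤ v i) → ∑ i, v i ≤ 1 →
        ∑ i, ∑ j, G i j * v i * v j ≤ ∑ i, ∑ j, G i j * u i * u j) := by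
  classical
  set F : (Fin n → ℝ) → ℝ := fun v => ∑ i, ∑ j, G i j * v i * v j with hF
  set K : Set (Fin n → ℝ) := {v | (∀ i, 0 ≤ v i) ∧ ∑ i, v i ≤ 1} with hK
  have hFcont : Continuous F := by
    apply continuous_finset_sum; intro i _
    apply continuous_finset_sum; intro j _
    exact ((continuous_const.mul (continuous_apply i)).mul (continuous_apply j))
  have hKclosed : IsClosed K := by
    have : K = (⋂ i, {v : Fin n → ℝ | 0 ≤ v i}) ∩ {v | ∑ i, v i ≤ 1} := by
      ext v; simp [hK, Set.mem_iInter]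
    rw [this]
    apply IsClosed.inter
    · exact isClosed_iInter (fun i => isClosed_le continuous_const (continuous_apply i))
    · exact isClosed_le (continuous_finset_sum _ (fun i _ => continuous_apply i)) continuous_const
  have hKsub : K ⊆ Metric.closedBall 0 1 := by
    rintro v ⟨hv0, hv1⟩
    rw [Metric.mem_closedBall, dist_zero_right]
    rw [pi_norm_le_iff_of_nonneg (by norm_num)]
    intro i
    rw [Real.norm_eq_abs, abs_of_nonneg (hv0 i)]
    calc v i ≤ ∑ j, v j := Finset.single_le_sum (fun j _ => hv0 j) (Finset.mem_univ i)
    _ ≤ 1 := hv1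
  have hKcompact : IsCompact K :=
    (isCompact_closedBall 0 1).of_isClosed_subset hKclosed hKsub
  have hKne : K.Nonempty := ⟨0, fun i => le_refl 0, by simp⟩
  obtain ⟨u, huK, hmax₀⟩ := hKcompact.exists_isMaxOn hKne hFcont.continuousOn
  obtain ⟨hunn, husum⟩ := huK
  have hmax : ∀ v ∈ K, F v ≤ F u := fun v hv => hmax₀ hv
  -- positivity
  obtain ⟨i₀, j₀, hij⟩ := hex
  have hi₀j₀ : i₀ ≠ j₀ := by
    intro h; rw [h, hdiag j₀] at hij; exact lt_irrefl 0 hij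
  set v₀ : Fin n → ℝ := fun k =>
    (1/2) * (Pi.single (M := fun _ : Fin n => ℝ) i₀ 1 k
      + Pi.single (M := fun _ : Fin n => ℝ) j₀ 1 k) with hv₀
  have hv₀nn : ∀ k, 0 ≤ v₀ k := by
    intro k
    rw [hv₀]
    have h1 : (0:ℝ) ≤ Pi.single (M := fun _ : Fin n => ℝ) i₀ 1 k := by
      rw [Pi.single_apply]; split <;> norm_num
    have h2 : (0:ℝ) ≤ Pi.single (M := fun _ : Fin n => ℝ) j₀ 1 k := by
      rw [Pi.single_apply]; split <;> norm_num
    simp only []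
    linarith
  have hv₀sum : ∑ k, v₀ k ≤ 1 := by
    rw [hv₀]
    simp only [← Finset.mul_sum, Finset.sum_add_distrib]
    rw [Finset.sum_pi_single', Finset.sum_pi_single']
    simp
    norm_num
  have hv₀F : 0 < F v₀ := by
    have hterm : G i₀ j₀ * v₀ i₀ * v₀ j₀ ≤ F v₀ := by
      have inner : ∀ i, 0 ≤ ∑ j, G i j * v₀ i * v₀ j := by
        intro i
        apply Finset.sum_nonneg; intro j _
        exact mul_nonneg (mul_nonneg (hnn i j) (hv₀nn i)) (hv₀nn j)
      calc G i₀ j₀ * v₀ i₀ * v₀ j₀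
          ≤ ∑ j, G i₀ j * v₀ i₀ * v₀ j := by
            apply Finset.single_le_sum (f := fun j => G i₀ j * v₀ i₀ * v₀ j)
              (fun j _ => mul_nonneg (mul_nonneg (hnn i₀ j) (hv₀nn i₀)) (hv₀nn j))
              (Finset.mem_univ j₀)
      _ ≤ F v₀ := Finset.single_le_sum (fun i _ => inner i) (Finset.mem_univ i₀)
    have hvi : v₀ i₀ = 1/2 := by
      rw [hv₀]; simp [Pi.single_apply, hi₀j₀, Ne.symm hi₀j₀]
    have hvj : v₀ j₀ = 1/2 := by
      rw [hv₀]; simp [Pi.single_apply, hi₀j₀, Ne.symm hi₀j₀]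
    rw [hvi, hvj] at hterm
    nlinarith
  have hFpos : 0 < F u := lt_of_lt_of_le hv₀F (hmax v₀ ⟨hv₀nn, hv₀sum⟩)
  -- sum = 1
  have husum1 : ∑ i, u i = 1 := by
    rcases eq_or_lt_of_le husum with h | h
    · exact h
    · exfalso
      have hspos : 0 < ∑ i, u i := by
        rcases eq_or_lt_of_le (Finset.sum_nonneg (fun i (_ : i ∈ Finset.univ) => hunn i)) with h0 | h0
        · exfalso
          have hall : ∀ i, u i = 0 := by
            intro i
            exact (Finset.sum_eq_zero_iff_of_nonneg (fun j _ => hunn j)).1 h0.symm i (Finset.mem_univ i)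
          have : F u = 0 := by
            apply Finset.sum_eq_zero; intro i _
            apply Finset.sum_eq_zero; intro j _
            rw [hall i]; ring
          rw [this] at hFpos; exact lt_irrefl 0 hFpos
        · exact h0
      set s := ∑ i, u i with hs
      have hs1 : s < 1 := h
      set v := fun k => s⁻¹ * u k with hv
      have hvK : v ∈ K := by
        constructor
        · intro i; exact mul_nonneg (inv_nonneg.2 hspos.le) (hunn i)
        · rw [hv]
          simp only [← Finset.mul_sum]
          rw [← hs, inv_mul_cancel₀ (ne_of_gt hspos)]
      have := hmax v hvK
      have hFv : F v = s⁻¹^2 * F u := by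
        rw [hF, hv]
        exact s12_scale G s⁻¹ u
      rw [hFv] at this
      have hinv : 1 < s⁻¹^2 := by
        have h1 : 1 < s⁻¹ := (one_lt_inv₀ hspos).2 hs1
        nlinarith
      nlinarith
  -- KKT
  have hKKT : ∀ i, 0 < u i → ∑ j, G i j * u j = F u := by
    have hle : ∀ i j, 0 < u j → (∑ l, G i l * u l) ≤ ∑ l, G j l * u l := by
      intro i j huj
      by_cases hij : i = j
      · rw [hij]
      have key : ∀ t : ℝ, 0 < t → t ≤ u j →
          (∑ l, G i l * u l) - (∑ l, G j l * u l) ≤ t * G i j := by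
        intro t ht htj
        set d : Fin n → ℝ := fun k => Pi.single (M := fun _ : Fin n => ℝ) i 1 k
          - Pi.single (M := fun _ : Fin n => ℝ) j 1 k with hd
        set v := fun k => u k + t * d k with hvdef
        have hdi : d i = 1 := by rw [hd]; simp [Pi.single_apply, hij]
        have hdj : d j = -1 := by rw [hd]; simp [Pi.single_apply, hij, Ne.symm hij]
        have hdk : ∀ k, k ≠ i → k ≠ j → d k = 0 := by
          intro k hki hkj
          rw [hd]; simp [Pi.single_apply, hki, hkj]
        have hvK : v ∈ K := by
          constructor
          · intro k
            rcases eq_or_ne k i with rfl | hki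
            · rw [hvdef]; simp only []; rw [hdi]; linarith [hunn k]
            rcases eq_or_ne k j with rfl | hkj
            · rw [hvdef]; simp only []; rw [hdj]; linarith
            · rw [hvdef]; simp only []; rw [hdk k hki hkj]; linarith [hunn k]
          · have : ∑ k, v k = ∑ k, u k + t * ∑ k, d k := by
              rw [hvdef]
              simp only [Finset.sum_add_distrib, ← Finset.mul_sum]
            have hdsum : ∑ k, d k = 0 := by
              rw [hd]
              simp only [Finset.sum_sub_distrib]
              rw [Finset.sum_pi_single', Finset.sum_pi_single']
              simp
            rw [this, hdsum, husum1]
            simp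
        have hFv := hmax v hvK
        have hexp : F v = F u + 2*t*(∑ k, d k * ∑ l, G k l * u l) + t^2 * F d := by
          rw [hF]
          exact s12_expand G hsym u d t
        have hlin : ∑ k, d k * ∑ l, G k l * u l
            = (∑ l, G i l * u l) - (∑ l, G j l * u l) := by
          rw [s12_sum_two hij _ (fun k hki hkj => by rw [hdk k hki hkj]; ring)]
          rw [hdi, hdj]; ring
        have hGd : ∀ k, ∑ l, G k l * d l = G k i - G k j := by
          intro k
          rw [s12_sum_two hij _ (fun l hli hlj => by rw [hdk l hli hlj]; ring)]
          rw [hdi, hdj]; ring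
        have hFd : F d = -2 * G i j := by
          have h1 : F d = ∑ k, d k * (G k i - G k j) := by
            rw [hF]
            apply Finset.sum_congr rfl; intro k _
            have : ∑ l, G k l * d k * d l = d k * ∑ l, G k l * d l := by
              rw [Finset.mul_sum]
              apply Finset.sum_congr rfl; intro l _; ring
            rw [this, hGd k]
          rw [h1, s12_sum_two hij _ (fun k hki hkj => by rw [hdk k hki hkj]; ring)]
          rw [hdi, hdj, hdiag i, hdiag j, hsym j i]; ring
        rw [hexp, hlin, hFd] at hFv
        nlinarith
      -- now conclude Δ ≤ 0
      by_contra hcon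
      push_neg at hcon
      set Δ := (∑ l, G i l * u l) - (∑ l, G j l * u l) with hΔ
      have hΔpos : 0 < Δ := by rw [hΔ]; linarith
      set t := min (u j) (Δ / (2 * (G i j + 1))) with ht
      have htpos : 0 < t := by
        apply lt_min huj
        apply div_pos hΔpos
        nlinarith [hnn i j]
      have htj : t ≤ u j := min_le_left _ _
      have := key t htpos htj
      have htG : t * G i j < Δ := by
        have h1 : t ≤ Δ / (2 * (G i j + 1)) := min_le_right _ _
        have h2 : 0 ≤ G i j := hnn i j
        have h3 : t * G i j ≤ (Δ / (2 * (G i j + 1))) * G i j :=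
          mul_le_mul_of_nonneg_right h1 h2
        have h4 : (Δ / (2 * (G i j + 1))) * G i j < Δ := by
          rw [div_mul_eq_mul_div, div_lt_iff₀ (by positivity)]
          nlinarith
        linarith
      linarith [hΔ.le, hΔ.ge]
    have heq : ∀ i j, 0 < u i → 0 < u j → (∑ l, G i l * u l) = ∑ l, G j l * u l :=
      fun i j hi hj => le_antisymm (hle i j hj) (hle j i hi)
    -- common value equals F u
    intro i hi
    have hFu : F u = ∑ k, u k * ∑ l, G k l * u l := by
      rw [hF]
      apply Finset.sum_congr rfl; intro k _
      rw [Finset.mul_sum]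
      apply Finset.sum_congr rfl; intro l _; ring
    have hterm : ∀ k, u k * ∑ l, G k l * u l = u k * ∑ l, G i l * u l := by
      intro k
      rcases eq_or_lt_of_le (hunn k) with h0 | h0
      · rw [← h0]; ring
      · rw [heq k i h0 hi]
    have : F u = (∑ l, G i l * u l) * ∑ k, u k := by
      rw [hFu, Finset.sum_congr rfl (fun k _ => hterm k), ← Finset.sum_mul]
      ring
    rw [this, husum1, mul_one]
  exact ⟨u, hunn, husum1, hFpos, hKKT, fun v hv hs => hmax v ⟨hv, hs⟩⟩

lemma s12_Fbound {n : ℕ} (G : Matrix (Fin n) (Fin n) ℝ) (hnn : ∀ i j, 0 ≤ G i j)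
    (Fv : ℝ) (hFnn : 0 ≤ Fv)
    (hmaxv : ∀ v : Fin n → ℝ, (∀ i, 0 ≤ v i) → ∑ i, v i ≤ 1 →
      ∑ i, ∑ j, G i j * v i * v j ≤ Fv)
    (σ : Fin n → ℝ) (hσ : ∀ i, 0 ≤ σ i) (hs : ∑ i, σ i ≤ 1) (x : Fin n → ℝ) :
    ∑ i, ∑ j, Real.sqrt (σ i) * Real.sqrt (σ j) * G i j * x i * x j
      ≤ Fv * ∑ i, (x i)^2 := by
  classical
  set v : Fin n → ℝ := fun i => Real.sqrt (σ i) * |x i| with hv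
  have hvnn : ∀ i, 0 ≤ v i := fun i => mul_nonneg (Real.sqrt_nonneg _) (abs_nonneg _)
  have hx2 : (0:ℝ) ≤ ∑ i, (x i)^2 := Finset.sum_nonneg (fun i _ => sq_nonneg _)
  have step1 : ∑ i, ∑ j, Real.sqrt (σ i) * Real.sqrt (σ j) * G i j * x i * x j
      ≤ ∑ i, ∑ j, G i j * v i * v j := by
    apply Finset.sum_le_sum; intro i _
    apply Finset.sum_le_sum; intro j _
    have ha : 0 ≤ Real.sqrt (σ i) * Real.sqrt (σ j) * G i j :=
      mul_nonneg (mul_nonneg (Real.sqrt_nonneg _) (Real.sqrt_nonneg _)) (hnn i j)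
    calc Real.sqrt (σ i) * Real.sqrt (σ j) * G i j * x i * x j
        = (Real.sqrt (σ i) * Real.sqrt (σ j) * G i j) * (x i * x j) := by ring
    _ ≤ (Real.sqrt (σ i) * Real.sqrt (σ j) * G i j) * |x i * x j| :=
        mul_le_mul_of_nonneg_left (le_abs_self _) ha
    _ = G i j * v i * v j := by
        rw [abs_mul, hv]; ring
  have step3 : (∑ i, v i)^2 ≤ ∑ i, (x i)^2 := by
    have hcs := Finset.sum_mul_sq_le_sq_mul_sq Finset.univ
      (fun i => Real.sqrt (σ i)) (fun i => |x i|)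
    have h1 : ∑ i, (Real.sqrt (σ i))^2 = ∑ i, σ i := by
      apply Finset.sum_congr rfl; intro i _
      exact Real.sq_sqrt (hσ i)
    have h2 : ∑ i, |x i|^2 = ∑ i, (x i)^2 := by
      apply Finset.sum_congr rfl; intro i _
      exact sq_abs _
    rw [h1, h2] at hcs
    calc (∑ i, v i)^2 ≤ (∑ i, σ i) * ∑ i, (x i)^2 := hcs
    _ ≤ 1 * ∑ i, (x i)^2 := mul_le_mul_of_nonneg_right hs hx2
    _ = ∑ i, (x i)^2 := one_mul _
  have step2 : ∑ i, ∑ j, G i j * v i * v j ≤ Fv * (∑ i, v i)^2 := by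
    rcases eq_or_lt_of_le (Finset.sum_nonneg (fun i (_ : i ∈ Finset.univ) => hvnn i)) with h0 | h0
    · have hall : ∀ i, v i = 0 := fun i =>
        (Finset.sum_eq_zero_iff_of_nonneg (fun j _ => hvnn j)).1 h0.symm i (Finset.mem_univ i)
      have : ∑ i, ∑ j, G i j * v i * v j = 0 := by
        apply Finset.sum_eq_zero; intro i _
        apply Finset.sum_eq_zero; intro j _
        rw [hall i]; ring
      rw [this]
      positivity
    · set s := ∑ i, v i with hsv
      have happ := hmaxv (fun i => s⁻¹ * v i)
        (fun i => mul_nonneg (inv_nonneg.2 h0.le) (hvnn i))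
        (by rw [← Finset.mul_sum, ← hsv, inv_mul_cancel₀ (ne_of_gt h0)])
      rw [s12_scale] at happ
      have hs2 : (0:ℝ) < s^2 := by positivity
      calc ∑ i, ∑ j, G i j * v i * v j
          = s^2 * ((s⁻¹)^2 * ∑ i, ∑ j, G i j * v i * v j) := by
            field_simp
      _ ≤ s^2 * Fv := mul_le_mul_of_nonneg_left happ hs2.le
      _ = Fv * s^2 := by ring
  calc ∑ i, ∑ j, Real.sqrt (σ i) * Real.sqrt (σ j) * G i j * x i * x j
      ≤ Fv * (∑ i, v i)^2 := le_trans step1 step2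
  _ ≤ Fv * ∑ i, (x i)^2 := mul_le_mul_of_nonneg_left step3 hFnn

lemma s12_eig_spec' {n : ℕ} (A : Matrix (Fin n) (Fin n) ℂ) {μ : ℂ} {x : Fin n → ℂ}
    (hx : x ≠ 0) (h : A.mulVec x = μ • x) : μ ∈ spectrum ℂ A := by
  rw [spectrum.mem_iff]
  intro hunit
  rw [Matrix.isUnit_iff_isUnit_det, isUnit_iff_ne_zero] at hunit
  apply hunit
  rw [← Matrix.exists_mulVec_eq_zero_iff]
  refine ⟨x, hx, ?_⟩
  rw [Matrix.sub_mulVec, sub_eq_zero, h]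
  rw [Algebra.algebraMap_eq_smul_one, Matrix.smul_mulVec, Matrix.one_mulVec]

lemma s12_spec_eig' {n : ℕ} (A : Matrix (Fin n) (Fin n) ℂ) {μ : ℂ}
    (h : μ ∈ spectrum ℂ A) : ∃ x : Fin n → ℂ, x ≠ 0 ∧ A.mulVec x = μ • x := by
  rw [spectrum.mem_iff] at h
  have hdet : (algebraMap ℂ (Matrix (Fin n) (Fin n) ℂ) μ - A).det = 0 := by
    by_contra hd
    exact h ((Matrix.isUnit_iff_isUnit_det _).2 (isUnit_iff_ne_zero.2 hd))
  obtain ⟨v, hv, hv0⟩ := Matrix.exists_mulVec_eq_zero_iff.2 hdet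
  refine ⟨v, hv, ?_⟩
  rw [Matrix.sub_mulVec, sub_eq_zero] at hv0
  rw [← hv0, Algebra.algebraMap_eq_smul_one, Matrix.smul_mulVec, Matrix.one_mulVec]

lemma s12_eig_bound {n : ℕ} (G : Matrix (Fin n) (Fin n) ℝ) (hnn : ∀ i j, 0 ≤ G i j)
    (Fv : ℝ) (hFvpos : 0 < Fv)
    (hmaxv : ∀ v : Fin n → ℝ, (∀ i, 0 ≤ v i) → ∑ i, v i ≤ 1 →
      ∑ i, ∑ j, G i j * v i * v j ≤ Fv)
    (hFb : ∀ (σ : Fin n → ℝ), (∀ i, 0 ≤ σ i) → ∑ i, σ i ≤ 1 → ∀ x : Fin n → ℝ,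
      ∑ i, ∑ j, Real.sqrt (σ i) * Real.sqrt (σ j) * G i j * x i * x j ≤ Fv * ∑ i, (x i)^2)
    (σ : Fin n → ℝ) (hσ : ∀ i, 0 ≤ σ i) (hs : ∑ i, σ i ≤ 1)
    {μ : ℂ} (hμ : μ ∈ spectrum ℂ ((Matrix.diagonal σ * G).map Complex.ofReal)) :
    ‖μ‖ ≤ Fv := by
  classical
  obtain ⟨x, hx0, hx⟩ := s12_spec_eig' _ hμ
  rcases le_or_gt ‖μ‖ 0 with hμ0 | hμpos
  · linarith
  set η : Fin n → ℝ := fun i => ‖x i‖ with hη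
  have hηnn : ∀ i, 0 ≤ η i := fun i => norm_nonneg _
  have hrow : ∀ i, ‖μ‖ * η i ≤ σ i * ∑ j, G i j * η j := by
    intro i
    have h1 := congrFun hx i
    have h2 : (((Matrix.diagonal σ * G).map Complex.ofReal).mulVec x) i
        = ∑ j, ((σ i * G i j : ℝ) : ℂ) * x j := by
      simp only [Matrix.mulVec, dotProduct, Matrix.map_apply, Matrix.diagonal_mul]
    rw [h2] at h1
    have h3 : ‖μ * x i‖ = ‖μ‖ * η i := by rw [norm_mul]
    have h4 : (μ • x) i = μ * x i := rfl
    calc ‖μ‖ * η i = ‖(μ • x) i‖ := by rw [h4, norm_mul]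
    _ = ‖∑ j, ((σ i * G i j : ℝ) : ℂ) * x j‖ := by rw [← h1]
    _ ≤ ∑ j, ‖((σ i * G i j : ℝ) : ℂ) * x j‖ := norm_sum_le _ _
    _ = ∑ j, σ i * G i j * η j := by
        apply Finset.sum_congr rfl; intro j _
        rw [norm_mul, Complex.norm_real, Real.norm_eq_abs,
          abs_of_nonneg (mul_nonneg (hσ i) (hnn i j))]
    _ = σ i * ∑ j, G i j * η j := by
        rw [Finset.mul_sum]
        apply Finset.sum_congr rfl; intro j _; ring
  set ξ : Fin n → ℝ := fun i => ∑ j, G i j * η j with hξ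
  have hξnn : ∀ i, 0 ≤ ξ i := fun i =>
    Finset.sum_nonneg (fun j _ => mul_nonneg (hnn i j) (hηnn j))
  have hξrow : ∀ k, ‖μ‖ * ξ k ≤ ∑ j, G k j * (σ j * ξ j) := by
    intro k
    have : ‖μ‖ * ξ k = ∑ j, G k j * (‖μ‖ * η j) := by
      rw [hξ]
      simp only [Finset.mul_sum]
      apply Finset.sum_congr rfl; intro j _; ring
    rw [this]
    apply Finset.sum_le_sum
    intro j _
    exact mul_le_mul_of_nonneg_left (hrow j) (hnn k j)
  set D := ∑ k, σ k * (ξ k)^2 with hD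
  have hDpos : 0 < D := by
    obtain ⟨i, hi⟩ : ∃ i, x i ≠ 0 := Function.ne_iff.1 hx0
    have hηi : 0 < η i := norm_pos_iff.2 hi
    have h1 : 0 < σ i * ξ i := lt_of_lt_of_le (mul_pos hμpos hηi) (hrow i)
    have h2 : 0 < σ i := by
      rcases eq_or_lt_of_le (hσ i) with h | h
      · rw [← h] at h1; simp at h1
      · exact h
    have h3 : 0 < ξ i := by nlinarith
    have : 0 < σ i * (ξ i)^2 := by positivity
    apply lt_of_lt_of_le this
    apply Finset.single_le_sum (f := fun k => σ k * (ξ k)^2)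
      (fun k _ => mul_nonneg (hσ k) (sq_nonneg _)) (Finset.mem_univ i)
  have hpair : ‖μ‖ * D ≤ ∑ k, ∑ j, Real.sqrt (σ k) * Real.sqrt (σ j) * G k j
      * (Real.sqrt (σ k) * ξ k) * (Real.sqrt (σ j) * ξ j) := by
    have h1 : ‖μ‖ * D = ∑ k, (σ k * ξ k) * (‖μ‖ * ξ k) := by
      rw [hD, Finset.mul_sum]
      apply Finset.sum_congr rfl; intro k _; ring
    rw [h1]
    have h2 : ∀ k, (σ k * ξ k) * (‖μ‖ * ξ k) ≤ (σ k * ξ k) * ∑ j, G k j * (σ j * ξ j) := by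
      intro k
      exact mul_le_mul_of_nonneg_left (hξrow k) (mul_nonneg (hσ k) (hξnn k))
    calc ∑ k, (σ k * ξ k) * (‖μ‖ * ξ k)
        ≤ ∑ k, (σ k * ξ k) * ∑ j, G k j * (σ j * ξ j) :=
          Finset.sum_le_sum (fun k _ => h2 k)
    _ = ∑ k, ∑ j, Real.sqrt (σ k) * Real.sqrt (σ j) * G k j
          * (Real.sqrt (σ k) * ξ k) * (Real.sqrt (σ j) * ξ j) := by
        apply Finset.sum_congr rfl; intro k _
        rw [Finset.mul_sum]
        apply Finset.sum_congr rfl; intro j _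
        have hk : Real.sqrt (σ k) * Real.sqrt (σ k) = σ k := Real.mul_self_sqrt (hσ k)
        have hj : Real.sqrt (σ j) * Real.sqrt (σ j) = σ j := Real.mul_self_sqrt (hσ j)
        linear_combination (-(G k j * ξ k * ξ j * (Real.sqrt (σ j) * Real.sqrt (σ j)))) * hk
          + (-(G k j * ξ k * ξ j * σ k)) * hj
  have hFb2 := hFb σ hσ hs (fun k => Real.sqrt (σ k) * ξ k)
  have hsum_eq : ∑ k, (Real.sqrt (σ k) * ξ k)^2 = D := by
    rw [hD]
    apply Finset.sum_congr rfl; intro k _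
    rw [mul_pow, Real.sq_sqrt (hσ k)]
  rw [hsum_eq] at hFb2
  have : ‖μ‖ * D ≤ Fv * D := le_trans hpair hFb2
  exact le_of_mul_le_mul_right (by linarith) hDpos

lemma s12_eqm_rows {n : ℕ} {G : Matrix (Fin n) (Fin n) ℝ} {β : ℝ} {P : ℝ → ℝ}
    {σ a : Fin n → ℝ} {Y : ℝ} (h : eqmCond G β P σ a Y) :
    ∀ i, a i = deriv P Y * σ i + (deriv P Y * β) * (σ i * ∑ j, G i j * a j) := by
  intro i
  have h2 := congrFun h.2.1 i
  rw [Matrix.sub_mulVec, Matrix.one_mulVec, Matrix.smul_mulVec,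
    ← Matrix.mulVec_mulVec] at h2
  have hd : (Matrix.diagonal σ *ᵥ (G *ᵥ a)) i = σ i * (G *ᵥ a) i :=
    Matrix.mulVec_diagonal σ (G *ᵥ a) i
  have hG : (G *ᵥ a) i = ∑ j, G i j * a j := rfl
  simp only [Pi.sub_apply, Pi.smul_apply, smul_eq_mul] at h2
  rw [hd, hG] at h2
  linarith [h2]

lemma ofReal_norm_eq_coe_nnnorm (z : ℂ) : ENNReal.ofReal ‖z‖ = (‖z‖₊ : ENNReal) := by
  exact ENNReal.ofReal_eq_coe_nnreal (norm_nonneg z)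

set_option maxHeartbeats 3000000

/-- an allocation that is optimal for the success probability objective
maximizes the spectral radius `ρ(diag(σ)·G)` among feasible allocations. -/
theorem statement_12 {n : ℕ} (G : Matrix (Fin n) (Fin n) ℝ)
    (hG_symm : G.IsSymm)
    (hG_nonneg : ∀ i j, 0 ≤ G i j)
    (hG_diag : ∀ i, G i i = 0)
    (hG_ne : G ≠ 0)
    (β : ℝ) (hβ : 0 < β)
    (P : ℝ → ℝ)
    (hP_mono : StrictMonoOn P (Set.Ici (0:ℝ)))
    (hP_conc : ConcaveOn ℝ (Set.Ici (0:ℝ)) P)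
    (hP_range : ∀ y : ℝ, 0 ≤ y → P y ∈ Set.Ico (0:ℝ) 1)
    (hP_diff : ∀ y : ℝ, 0 ≤ y → DifferentiableAt ℝ P y)
    (hP_diff2 : ∀ y : ℝ, 0 ≤ y → DifferentiableAt ℝ (deriv P) y)
    (astar : (Fin n → ℝ) → Fin n → ℝ) (Ystar : (Fin n → ℝ) → ℝ)
    (heqm : ∀ σ : Fin n → ℝ, (∀ i, 0 ≤ σ i) → eqmCond G β P σ (astar σ) (Ystar σ))
    (σstar : Fin n → ℝ) (hσnn : ∀ i, 0 ≤ σstar i) (hσsum : ∑ i, σstar i ≤ 1)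
    (hopt : ∀ σ : Fin n → ℝ, (∀ i, 0 ≤ σ i) → ∑ i, σ i ≤ 1 →
      P (Ystar σ) ≤ P (Ystar σstar)) :
    ∀ σ : Fin n → ℝ, (∀ i, 0 ≤ σ i) → ∑ i, σ i ≤ 1 →
      matrixSpectralRadius (Matrix.diagonal σ * G)
        ≤ matrixSpectralRadius (Matrix.diagonal σstar * G) := by
  intro σ hσ hσs
  by_cases hn : n = 0
  · subst hn
    have he : Matrix.diagonal σ * G = Matrix.diagonal σstar * G := by
      ext i j; exact i.elim0
    rw [he]
  haveI : Nonempty (Fin n) := ⟨⟨0, Nat.pos_of_ne_zero hn⟩⟩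
  classical
  -- G facts
  have hGsym : ∀ i j, G i j = G j i := by
    intro i j
    have h1 := congrFun (congrFun hG_symm i) j
    rw [Matrix.transpose_apply] at h1
    exact h1.symm
  have hGex : ∃ i j, 0 < G i j := by
    by_contra hc; push_neg at hc
    apply hG_ne
    ext i j
    simpa using le_antisymm (hc i j) (hG_nonneg i j)
  obtain ⟨u, hunn, husum, hFpos, hKKT, hmaxu⟩ := s12_quadMax G hGsym hG_nonneg hG_diag hGex
  set Fv : ℝ := ∑ i, ∑ j, G i j * u i * u j with hFvdef
  have hFb : ∀ (σ0 : Fin n → ℝ), (∀ i, 0 ≤ σ0 i) → ∑ i, σ0 i ≤ 1 → ∀ x : Fin n → ℝ,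
      ∑ i, ∑ j, Real.sqrt (σ0 i) * Real.sqrt (σ0 j) * G i j * x i * x j ≤ Fv * ∑ i, (x i)^2 :=
    fun σ0 h0 h1 x => s12_Fbound G hG_nonneg Fv (le_of_lt hFpos) hmaxu σ0 h0 h1 x
  -- P facts
  have hder_pos := s12_deriv_pos P hP_mono hP_conc hP_diff
  have hder_anti : AntitoneOn (deriv P) (Set.Ici 0) :=
    hP_conc.antitoneOn_deriv (fun x hx => hP_diff x hx)
  -- equilibrium at u
  have hequ := heqm u hunn
  have hrowsU := s12_eqm_rows hequ
  set Y' := Ystar u with hY'def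
  set a' := astar u with ha'def
  set c' := deriv P Y' with hc'def
  have ha'nn : ∀ i, 0 ≤ a' i := hequ.1
  have hY'eq : Y' = ∑ i, a' i + β / 2 * ∑ i, ∑ j, G i j * a' i * a' j := hequ.2.2
  have hquadU : 0 ≤ ∑ i, ∑ j, G i j * a' i * a' j :=
    Finset.sum_nonneg fun i _ => Finset.sum_nonneg fun j _ =>
      mul_nonneg (mul_nonneg (hG_nonneg i j) (ha'nn i)) (ha'nn j)
  have hsumU : 0 ≤ ∑ i, a' i := Finset.sum_nonneg fun i _ => ha'nn i
  have hY'0 : 0 ≤ Y' := by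
    rw [hY'eq]
    have : 0 ≤ β / 2 * ∑ i, ∑ j, G i j * a' i * a' j :=
      mul_nonneg (by linarith only [hβ]) hquadU
    linarith only [this, hsumU]
  have hc'pos : 0 < c' := hder_pos Y' hY'0
  -- Block A: a' = θ u
  set y : Fin n → ℝ := fun i => ∑ j, G i j * u j with hydef
  have hynn : ∀ i, 0 ≤ y i := fun i =>
    Finset.sum_nonneg fun j _ => mul_nonneg (hG_nonneg i j) (hunn j)
  have hyu : ∑ i, y i * u i = Fv := by
    rw [hFvdef]
    apply Finset.sum_congr rfl; intro i _
    have hyi : y i = ∑ j, G i j * u j := rfl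
    rw [hyi, Finset.sum_mul]
    apply Finset.sum_congr rfl; intro j _; ring
  have hKKTrow : ∀ i, u i * y i = Fv * u i := by
    intro i
    rcases eq_or_lt_of_le (hunn i) with h0 | h0
    · rw [← h0]; ring
    · have hyi : y i = ∑ j, G i j * u j := rfl
      rw [hyi, hKKT i h0]; ring
  set E := ∑ i, y i * a' i with hEdef
  have hEnn : 0 ≤ E := Finset.sum_nonneg fun i _ => mul_nonneg (hynn i) (ha'nn i)
  have hswapE : ∑ i, u i * ∑ j, G i j * a' j = E := by
    calc ∑ i, u i * ∑ j, G i j * a' j = ∑ i, ∑ j, G i j * u i * a' j := by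
          apply Finset.sum_congr rfl; intro i _
          rw [Finset.mul_sum]
          apply Finset.sum_congr rfl; intro j _; ring
    _ = ∑ j, ∑ i, G i j * u i * a' j := Finset.sum_comm
    _ = ∑ j, y j * a' j := by
          apply Finset.sum_congr rfl; intro j _
          have hyj : y j = ∑ i, G j i * u i := rfl
          rw [hyj, Finset.sum_mul]
          apply Finset.sum_congr rfl; intro i _
          rw [hGsym i j]
    _ = E := rfl
  have hE : E * (1 - c' * β * Fv) = c' * Fv := by
    have h1 : E = ∑ i, y i * (c' * u i + (c' * β) * (u i * ∑ j, G i j * a' j)) := by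
      rw [hEdef]
      apply Finset.sum_congr rfl; intro i _
      rw [← hrowsU i]
    have h2 : ∑ i, y i * (c' * u i + (c' * β) * (u i * ∑ j, G i j * a' j))
        = c' * (∑ i, y i * u i) + (c' * β) * ∑ i, (u i * y i) * ∑ j, G i j * a' j := by
      have h3 : ∀ i, y i * (c' * u i + (c' * β) * (u i * ∑ j, G i j * a' j))
          = c' * (y i * u i) + (c' * β) * ((u i * y i) * ∑ j, G i j * a' j) := by
        intro i; ring
      rw [Finset.sum_congr rfl (fun i _ => h3 i), Finset.sum_add_distrib,
        ← Finset.mul_sum, ← Finset.mul_sum]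
    have h4 : ∑ i, (u i * y i) * ∑ j, G i j * a' j
        = Fv * ∑ i, u i * ∑ j, G i j * a' j := by
      rw [Finset.mul_sum]
      apply Finset.sum_congr rfl; intro i _
      rw [hKKTrow i]; ring
    rw [h2, h4, hswapE, hyu] at h1
    linear_combination h1
  have hden : 0 < 1 - c' * β * Fv := by
    rcases le_or_gt (1 - c' * β * Fv) 0 with h | h
    · exfalso
      have h1 : 0 < c' * Fv := mul_pos hc'pos hFpos
      nlinarith only [hE, h1, mul_nonneg hEnn (neg_nonneg.2 h)]
    · exact h
  set θ := c' / (1 - c' * β * Fv) with hθdef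
  have hθpos : 0 < θ := div_pos hc'pos hden
  have hθeq : θ * (1 - c' * β * Fv) = c' := div_mul_cancel₀ c' (ne_of_gt hden)
  set p : Fin n → ℝ := fun i => Real.sqrt (u i) with hpdef
  have hpsq : ∀ i, p i * p i = u i := fun i => Real.mul_self_sqrt (hunn i)
  have hpnn : ∀ i, 0 ≤ p i := fun i => Real.sqrt_nonneg _
  set z : Fin n → ℝ := fun i => p i * (c' + c' * β * ∑ j, G i j * a' j) with hzdef
  have ha'z : ∀ i, a' i = p i * z i := by
    intro i
    have h1 : p i * z i = (p i * p i) * (c' + c' * β * ∑ j, G i j * a' j) := by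
      have hzi : z i = p i * (c' + c' * β * ∑ j, G i j * a' j) := rfl
      rw [hzi]; ring
    rw [h1, hpsq i, hrowsU i]; ring
  have hzrow : ∀ i, z i = c' * p i + (c' * β) * ∑ j, (p i * G i j * p j) * z j := by
    intro i
    have h1 : ∑ j, (p i * G i j * p j) * z j = p i * ∑ j, G i j * a' j := by
      rw [Finset.mul_sum]
      apply Finset.sum_congr rfl; intro j _
      rw [ha'z j]; ring
    have hzi : z i = p i * (c' + c' * β * ∑ j, G i j * a' j) := rfl
    rw [h1, hzi]; ring
  have hpeig : ∀ i, ∑ j, (p i * G i j * p j) * p j = Fv * p i := by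
    intro i
    have h1 : ∑ j, (p i * G i j * p j) * p j = p i * ∑ j, G i j * u j := by
      rw [Finset.mul_sum]
      apply Finset.sum_congr rfl; intro j _
      rw [← hpsq j]; ring
    rw [h1]
    rcases eq_or_lt_of_le (hunn i) with h0 | h0
    · have hp0 : p i = 0 := by
        have hpi : p i = Real.sqrt (u i) := rfl
        rw [hpi, ← h0, Real.sqrt_zero]
      rw [hp0]; ring
    · rw [hKKT i h0]; ring
  set d : Fin n → ℝ := fun i => z i - θ * p i with hddef
  have hdi : ∀ i, d i = z i - θ * p i := fun i => rfl
  have hdrow : ∀ i, d i = (c' * β) * ∑ j, (p i * G i j * p j) * d j := by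
    intro i
    have h1 : ∑ j, (p i * G i j * p j) * d j
        = (∑ j, (p i * G i j * p j) * z j) - θ * (Fv * p i) := by
      have h2 : ∀ j, (p i * G i j * p j) * d j
          = (p i * G i j * p j) * z j - θ * ((p i * G i j * p j) * p j) := by
        intro j; rw [hdi j]; ring
      rw [Finset.sum_congr rfl (fun j _ => h2 j), Finset.sum_sub_distrib,
        ← Finset.mul_sum, hpeig i]
    rw [hdi i, hzrow i, h1]
    linear_combination (- p i) * hθeq
  have hdzero : ∀ i, d i = 0 := by
    have hDnn : 0 ≤ ∑ i, (d i)^2 := Finset.sum_nonneg fun i _ => sq_nonneg _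
    have key : ∀ i, d i * ((c' * β) * ∑ j, (p i * G i j * p j) * d j)
        = (c' * β) * ∑ j, Real.sqrt (u i) * Real.sqrt (u j) * G i j * d i * d j := by
      intro i
      have h2 : ∑ j, Real.sqrt (u i) * Real.sqrt (u j) * G i j * d i * d j
          = d i * ∑ j, (p i * G i j * p j) * d j := by
        rw [Finset.mul_sum]
        apply Finset.sum_congr rfl; intro j _
        have hpi : p i = Real.sqrt (u i) := rfl
        have hpj : p j = Real.sqrt (u j) := rfl
        rw [hpi, hpj]; ring
      rw [h2]; ring
    have h1 : ∑ i, (d i)^2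
        = (c' * β) * ∑ i, ∑ j, Real.sqrt (u i) * Real.sqrt (u j) * G i j * d i * d j := by
      calc ∑ i, (d i)^2 = ∑ i, d i * ((c' * β) * ∑ j, (p i * G i j * p j) * d j) := by
            apply Finset.sum_congr rfl; intro i _
            rw [← hdrow i]; ring
      _ = ∑ i, (c' * β) * ∑ j, Real.sqrt (u i) * Real.sqrt (u j) * G i j * d i * d j := by
            apply Finset.sum_congr rfl; intro i _
            exact key i
      _ = (c' * β) * ∑ i, ∑ j, Real.sqrt (u i) * Real.sqrt (u j) * G i j * d i * d j := by
            rw [← Finset.mul_sum]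
    have h2 := hFb u hunn (le_of_eq husum) d
    have hD0 : ∑ i, (d i)^2 ≤ 0 := by
      by_contra hcon; push_neg at hcon
      have hh1 := mul_le_mul_of_nonneg_left h2 (mul_nonneg hc'pos.le hβ.le)
      have hh2 := mul_pos hden hcon
      nlinarith only [h1, hh1, hh2]
    have hDeq : ∑ i, (d i)^2 = 0 := le_antisymm hD0 hDnn
    intro i
    have := (Finset.sum_eq_zero_iff_of_nonneg
      (fun j (_ : j ∈ Finset.univ) => sq_nonneg (d j))).1 hDeq i (Finset.mem_univ i)
    exact pow_eq_zero_iff (by norm_num) |>.1 this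
  have ha'u : ∀ i, a' i = θ * u i := by
    intro i
    have h1 : z i = θ * p i := by
      have := hdzero i
      rw [hdi i] at this
      linarith only [this]
    rw [ha'z i, h1, ← hpsq i]; ring
  have hYval : Y' = θ + β / 2 * (θ^2 * Fv) := by
    rw [hY'eq]
    have h1 : ∑ i, a' i = θ := by
      rw [Finset.sum_congr rfl (fun i (_ : i ∈ Finset.univ) => ha'u i),
        ← Finset.mul_sum, husum, mul_one]
    have h2 : ∑ i, ∑ j, G i j * a' i * a' j = θ^2 * Fv := by
      rw [hFvdef]
      calc ∑ i, ∑ j, G i j * a' i * a' j = ∑ i, ∑ j, G i j * (θ * u i) * (θ * u j) := by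
            apply Finset.sum_congr rfl; intro i _
            apply Finset.sum_congr rfl; intro j _
            rw [ha'u i, ha'u j]
      _ = θ^2 * ∑ i, ∑ j, G i j * u i * u j := s12_scale G θ u
    rw [h1, h2]
  have hc'βF : c' * β * Fv < 1 := by linarith only [hden]
  -- Block B: σstar bound
  have heqs := heqm σstar hσnn
  have hrowsS := s12_eqm_rows heqs
  set Ys := Ystar σstar with hYsdef
  set as := astar σstar with hasdef
  set cs := deriv P Ys with hcsdef
  have hasnn : ∀ i, 0 ≤ as i := heqs.1
  have hYseq : Ys = ∑ i, as i + β / 2 * ∑ i, ∑ j, G i j * as i * as j := heqs.2.2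
  have hquadS : 0 ≤ ∑ i, ∑ j, G i j * as i * as j :=
    Finset.sum_nonneg fun i _ => Finset.sum_nonneg fun j _ =>
      mul_nonneg (mul_nonneg (hG_nonneg i j) (hasnn i)) (hasnn j)
  have hsumS : 0 ≤ ∑ i, as i := Finset.sum_nonneg fun i _ => hasnn i
  have hYs0 : 0 ≤ Ys := by
    rw [hYseq]
    have : 0 ≤ β / 2 * ∑ i, ∑ j, G i j * as i * as j := mul_nonneg (by linarith only [hβ]) hquadS
    linarith only [this, hsumS]
  have hcspos : 0 < cs := hder_pos Ys hYs0
  set q : Fin n → ℝ := fun i => Real.sqrt (σstar i) with hqdef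
  have hqsq : ∀ i, q i * q i = σstar i := fun i => Real.mul_self_sqrt (hσnn i)
  have hqnn : ∀ i, 0 ≤ q i := fun i => Real.sqrt_nonneg _
  set S : Matrix (Fin n) (Fin n) ℝ :=
    Matrix.of (fun i j => Real.sqrt (σstar i) * Real.sqrt (σstar j) * G i j) with hSdef
  have hSapp : ∀ i j, S i j = q i * q j * G i j := fun i j => rfl
  have hSsym : ∀ i j, S i j = S j i := by
    intro i j; rw [hSapp i j, hSapp j i, hGsym i j]; ring
  have hSnn : ∀ i j, 0 ≤ S i j := by
    intro i j; rw [hSapp i j]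
    exact mul_nonneg (mul_nonneg (hqnn i) (hqnn j)) (hG_nonneg i j)
  obtain ⟨r, w, hrnn, hwnn, hwsum, hweig, hrbound⟩ := s12_rayleigh S hSsym hSnn
  have hGasnn : ∀ i, 0 ≤ ∑ j, G i j * as j := fun i =>
    Finset.sum_nonneg fun j _ => mul_nonneg (hG_nonneg i j) (hasnn j)
  set zs : Fin n → ℝ := fun i => q i * (cs + cs * β * ∑ j, G i j * as j) with hzsdef
  have hzsi : ∀ i, zs i = q i * (cs + cs * β * ∑ j, G i j * as j) := fun i => rfl
  have hzsnn : ∀ i, 0 ≤ zs i := by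
    intro i
    rw [hzsi i]
    apply mul_nonneg (hqnn i)
    have : 0 ≤ cs * β * ∑ j, G i j * as j :=
      mul_nonneg (mul_nonneg hcspos.le hβ.le) (hGasnn i)
    linarith only [this, hcspos]
  have haszs : ∀ i, as i = q i * zs i := by
    intro i
    have h1 : q i * zs i = (q i * q i) * (cs + cs * β * ∑ j, G i j * as j) := by
      rw [hzsi i]; ring
    rw [h1, hqsq i, hrowsS i]; ring
  have hzsrow : ∀ i, zs i = cs * q i + (cs * β) * ∑ j, (q i * G i j * q j) * zs j := by
    intro i
    have h1 : ∑ j, (q i * G i j * q j) * zs j = q i * ∑ j, G i j * as j := by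
      rw [Finset.mul_sum]
      apply Finset.sum_congr rfl; intro j _
      rw [haszs j]; ring
    rw [h1, hzsi i]; ring
  set B := ∑ i, q i * zs i with hBdef
  set X := ∑ i, (zs i)^2 with hXdef
  set T := ∑ i, ∑ j, S i j * zs i * zs j with hTdef
  have hBnn : 0 ≤ B := Finset.sum_nonneg fun i _ => mul_nonneg (hqnn i) (hzsnn i)
  have hXnn : 0 ≤ X := Finset.sum_nonneg fun i _ => sq_nonneg _
  have hTle : T ≤ r * X := hrbound zs
  have hXeq : X = cs * B + (cs * β) * T := by
    have h1 : ∀ i, (zs i)^2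
        = cs * (q i * zs i) + (cs * β) * ∑ j, S i j * zs i * zs j := by
      intro i
      have h2 : ∑ j, S i j * zs i * zs j = zs i * ∑ j, (q i * G i j * q j) * zs j := by
        rw [Finset.mul_sum]
        apply Finset.sum_congr rfl; intro j _
        rw [hSapp i j]; ring
      rw [h2]
      calc (zs i)^2 = zs i * zs i := by ring
      _ = zs i * (cs * q i + (cs * β) * ∑ j, (q i * G i j * q j) * zs j) := by
          rw [← hzsrow i]
      _ = cs * (q i * zs i) + (cs * β) * (zs i * ∑ j, (q i * G i j * q j) * zs j) := by
          ring
    rw [hXdef, Finset.sum_congr rfl (fun i (_ : i ∈ Finset.univ) => h1 i),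
      Finset.sum_add_distrib, ← Finset.mul_sum, ← Finset.mul_sum]
  have hYsval : Ys = B + β / 2 * T := by
    rw [hYseq]
    have h1 : ∑ i, as i = B := by
      apply Finset.sum_congr rfl; intro i _; exact haszs i
    have h2 : ∑ i, ∑ j, G i j * as i * as j = T := by
      apply Finset.sum_congr rfl; intro i _
      apply Finset.sum_congr rfl; intro j _
      rw [haszs i, haszs j, hSapp i j]; ring
    rw [h1, h2]
  have hcsr : cs * β * r < 1 := by
    rcases eq_or_lt_of_le hrnn with hr0 | hrpos
    · rw [← hr0]; norm_num
    · set Bw := ∑ i, w i * q i with hBwdef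
      have hBwnn : 0 ≤ Bw := Finset.sum_nonneg fun i _ => mul_nonneg (hwnn i) (hqnn i)
      have hBwpos : 0 < Bw := by
        rcases eq_or_lt_of_le hBwnn with h0 | h0
        · exfalso
          have hall : ∀ i, w i * q i = 0 := fun i =>
            (Finset.sum_eq_zero_iff_of_nonneg
              (fun j _ => mul_nonneg (hwnn j) (hqnn j))).1 h0.symm i (Finset.mem_univ i)
          have hw0 : ∀ i, w i = 0 := by
            intro i
            rcases eq_or_ne (q i) 0 with hq0 | hq0
            · have hz : ∑ j, S i j * w j = 0 := by
                apply Finset.sum_eq_zero; intro j _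
                rw [hSapp i j, hq0]; ring
              have := hweig i
              rw [hz] at this
              have := this.symm
              rcases mul_eq_zero.1 this with h | h
              · exact absurd h (ne_of_gt hrpos)
              · exact h
            · rcases mul_eq_zero.1 (hall i) with h | h
              · exact h
              · exact absurd h hq0
          have : ∑ i, (w i)^2 = 0 := by
            apply Finset.sum_eq_zero; intro i _
            rw [hw0 i]; ring
          rw [this] at hwsum
          norm_num at hwsum
        · exact h0
      set W2 := ∑ i, w i * zs i with hW2def
      have hW2nn : 0 ≤ W2 := Finset.sum_nonneg fun i _ => mul_nonneg (hwnn i) (hzsnn i)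
      have hW2eq : W2 = cs * Bw + (cs * β) * (r * W2) := by
        have h1 : W2 = ∑ i, w i * (cs * q i + (cs * β) * ∑ j, (q i * G i j * q j) * zs j) := by
          rw [hW2def]
          apply Finset.sum_congr rfl; intro i _
          rw [← hzsrow i]
        have h2 : ∑ i, w i * (cs * q i + (cs * β) * ∑ j, (q i * G i j * q j) * zs j)
            = cs * Bw + (cs * β) * ∑ i, ∑ j, (w i * S i j) * zs j := by
          have h3 : ∀ i, w i * (cs * q i + (cs * β) * ∑ j, (q i * G i j * q j) * zs j)
              = cs * (w i * q i) + (cs * β) * ∑ j, (w i * S i j) * zs j := by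
            intro i
            have h4 : ∑ j, (w i * S i j) * zs j = w i * ∑ j, (q i * G i j * q j) * zs j := by
              rw [Finset.mul_sum]
              apply Finset.sum_congr rfl; intro j _
              rw [hSapp i j]; ring
            rw [h4]; ring
          rw [Finset.sum_congr rfl (fun i _ => h3 i), Finset.sum_add_distrib,
            ← Finset.mul_sum, ← Finset.mul_sum, hBwdef]
        have h5 : ∑ i, ∑ j, (w i * S i j) * zs j = r * W2 := by
          rw [Finset.sum_comm]
          have h6 : ∀ j, ∑ i, (w i * S i j) * zs j = (r * w j) * zs j := by
            intro j
            have h7 : ∑ i, (w i * S i j) * zs j = (∑ i, S j i * w i) * zs j := by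
              rw [Finset.sum_mul]
              apply Finset.sum_congr rfl; intro i _
              rw [hSsym j i]; ring
            rw [h7, hweig j]
          rw [Finset.sum_congr rfl (fun j _ => h6 j), hW2def, Finset.mul_sum]
          apply Finset.sum_congr rfl; intro j _; ring
        rw [h2, h5] at h1
        exact h1
      have hposBW : 0 < cs * Bw := mul_pos hcspos hBwpos
      rcases le_or_gt 1 (cs * β * r) with h | h
      · exfalso
        linarith only [hW2eq, hposBW, mul_le_mul_of_nonneg_right h hW2nn]
      · exact h
  have hden2 : 0 < 1 - cs * β * r := by linarith only [hcsr]
  set m := cs / (1 - cs * β * r) with hmdef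
  have hmpos : 0 < m := div_pos hcspos hden2
  have hmeq : m * (1 - cs * β * r) = cs := div_mul_cancel₀ cs (ne_of_gt hden2)
  have hXle : X ≤ m * B := by
    have h1 : (1 - cs * β * r) * X ≤ cs * B := by
      have hmul := mul_le_mul_of_nonneg_left hTle (mul_nonneg hcspos.le hβ.le)
      linarith only [hXeq, hmul]
    by_contra hcon; push_neg at hcon
    have hmeqB : m * (1 - cs * β * r) * B = cs * B := by rw [hmeq]
    nlinarith only [h1, hmeqB, mul_pos hden2 (sub_pos.2 hcon)]
  set W := ∑ i, σstar i with hWdef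
  have hWnn : 0 ≤ W := Finset.sum_nonneg fun i _ => hσnn i
  have hB2 : B^2 ≤ W * X := by
    have hcs := Finset.sum_mul_sq_le_sq_mul_sq Finset.univ q zs
    have h1 : ∑ i, (q i)^2 = W := by
      rw [hWdef]
      apply Finset.sum_congr rfl; intro i _
      rw [sq, hqsq i]
    rw [h1] at hcs
    exact hcs
  have hBle : B ≤ m * W := by
    rcases eq_or_lt_of_le hBnn with h0 | h0
    · rw [← h0]; positivity
    · by_contra hcon; push_neg at hcon
      nlinarith only [hB2, mul_le_mul_of_nonneg_left hXle hWnn,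
        mul_lt_mul_of_pos_right hcon h0]
  have hYs_le : Ys ≤ m + β / 2 * (r * m^2) := by
    rw [hYsval]
    have p1 : T ≤ r * (m * B) := le_trans hTle (mul_le_mul_of_nonneg_left hXle hrnn)
    have p2 : T ≤ r * (m * (m * W)) := by
      apply le_trans p1
      apply mul_le_mul_of_nonneg_left _ hrnn
      exact mul_le_mul_of_nonneg_left hBle hmpos.le
    have p3 : W ≤ 1 := hσsum
    have hBm : B ≤ m := by nlinarith only [hBle, hmpos, p3]
    have hTm : T ≤ r * m^2 := by
      apply le_trans p2
      nlinarith only [mul_nonneg (mul_nonneg hrnn (mul_nonneg hmpos.le hmpos.le))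
        (sub_nonneg.2 p3)]
    have h6 := mul_le_mul_of_nonneg_left hTm (by linarith only [hβ] : (0:ℝ) ≤ β / 2)
    linarith only [hBm, h6]
  -- Block C: comparison and contradiction
  have hPle := hopt u hunn (le_of_eq husum)
  have hY'Ys : Y' ≤ Ys := by
    by_contra hcon; push_neg at hcon
    have h1 := hP_mono (Set.mem_Ici.2 hYs0) (Set.mem_Ici.2 hY'0) hcon
    have hPle' : P Y' ≤ P Ys := hPle
    linarith only [h1, hPle']
  have hcc : cs ≤ c' := hder_anti (Set.mem_Ici.2 hY'0) (Set.mem_Ici.2 hYs0) hY'Ys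
  have hFr : Fv ≤ r := by
    by_contra hrF; push_neg at hrF
    have hmθ : m < θ := by
      rw [hmdef, hθdef, div_lt_div_iff₀ hden2 hden]
      nlinarith only [hcc, mul_pos (mul_pos (mul_pos hcspos hc'pos) hβ) (sub_pos.2 hrF)]
    have hlt : m + β / 2 * (r * m^2) < θ + β / 2 * (θ^2 * Fv) := by
      have hm2 : m^2 ≤ θ^2 := by nlinarith only [hmθ, hmpos]
      have hh1 : r * m^2 ≤ r * θ^2 := mul_le_mul_of_nonneg_left hm2 hrnn
      have hh2 : r * θ^2 ≤ Fv * θ^2 := mul_le_mul_of_nonneg_right hrF.le (sq_nonneg θ)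
      have hh3 : β / 2 * (r * m^2) ≤ β / 2 * (θ^2 * Fv) := by
        apply mul_le_mul_of_nonneg_left _ (by linarith only [hβ] : (0:ℝ) ≤ β / 2)
        linarith only [hh1, hh2]
      linarith only [hmθ, hh3]
    have hYsY' : Ys < Y' := by
      rw [hYval]
      linarith only [hYs_le, hlt]
    linarith only [hY'Ys, hYsY']
  -- Spectral conclusion
  have hrpos : 0 < r := lt_of_lt_of_le hFpos hFr
  have hx_ex : ∃ i, q i * w i ≠ 0 := by
    by_contra hcon; push_neg at hcon
    have hw0 : ∀ i, w i = 0 := by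
      intro i
      have he := hweig i
      have hz : ∑ j, S i j * w j = 0 := by
        apply Finset.sum_eq_zero; intro j _
        rw [hSapp i j]
        rcases mul_eq_zero.1 (hcon j) with h | h
        · rw [h]; ring
        · rw [h]; ring
      rw [hz] at he
      rcases mul_eq_zero.1 he.symm with h | h
      · exact absurd h (ne_of_gt hrpos)
      · exact h
    have : ∑ i, (w i)^2 = 0 := by
      apply Finset.sum_eq_zero; intro i _
      rw [hw0 i]; ring
    rw [this] at hwsum
    norm_num at hwsum
  obtain ⟨i0, hi0⟩ := hx_ex
  set xr : Fin n → ℝ := fun i => q i * w i with hxrdef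
  have hxri : ∀ i, xr i = q i * w i := fun i => rfl
  have hxreig : ∀ i, ∑ j, (σstar i * G i j) * xr j = r * xr i := by
    intro i
    calc ∑ j, (σstar i * G i j) * xr j = q i * ∑ j, S i j * w j := by
          rw [Finset.mul_sum]
          apply Finset.sum_congr rfl; intro j _
          rw [hxri j, hSapp i j, ← hqsq i]; ring
    _ = q i * (r * w i) := by rw [hweig i]
    _ = r * xr i := by rw [hxri i]; ring
  set Ac := (Matrix.diagonal σstar * G).map Complex.ofReal with hAcdef
  have hxc0 : (fun i => ((xr i : ℝ) : ℂ)) ≠ 0 := by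
    intro hcon
    have := congrFun hcon i0
    simp only [Pi.zero_apply, Complex.ofReal_eq_zero] at this
    exact hi0 (by rw [← hxri i0]; exact this)
  have hmulc : Ac.mulVec (fun i => ((xr i : ℝ) : ℂ))
      = ((r : ℝ) : ℂ) • (fun i => ((xr i : ℝ) : ℂ)) := by
    funext i
    have h2 : (Ac.mulVec fun i => ((xr i : ℝ) : ℂ)) i
        = ∑ j, ((σstar i * G i j : ℝ) : ℂ) * ((xr j : ℝ) : ℂ) := by
      rw [hAcdef]
      simp only [Matrix.mulVec, dotProduct, Matrix.map_apply, Matrix.diagonal_mul]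
    rw [h2]
    have h3 : ∑ j, ((σstar i * G i j : ℝ) : ℂ) * ((xr j : ℝ) : ℂ)
        = (((∑ j, (σstar i * G i j) * xr j : ℝ)) : ℂ) := by
      push_cast; ring
    rw [h3, hxreig i]
    simp only [Pi.smul_apply, smul_eq_mul]
    push_cast; ring
  have hrspec : ((r : ℝ) : ℂ) ∈ spectrum ℂ Ac := s12_eig_spec' Ac hxc0 hmulc
  calc matrixSpectralRadius (Matrix.diagonal σ * G) ≤ ENNReal.ofReal Fv := by
        simp only [matrixSpectralRadius, spectralRadius]
        apply iSup₂_le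
        intro μ hμ
        have hb := s12_eig_bound G hG_nonneg Fv hFpos hmaxu hFb σ hσ hσs hμ
        rw [← ofReal_norm_eq_coe_nnnorm]
        exact ENNReal.ofReal_le_ofReal hb
  _ ≤ ENNReal.ofReal r := ENNReal.ofReal_le_ofReal hFr
  _ ≤ matrixSpectralRadius (Matrix.diagonal σstar * G) := by
        simp only [matrixSpectralRadius, spectralRadius]
        have h1 : ENNReal.ofReal r = (‖((r : ℝ) : ℂ)‖₊ : ENNReal) := by
          rw [← ofReal_norm_eq_coe_nnnorm, Complex.norm_real, Real.norm_eq_abs,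
            abs_of_nonneg hrnn]
        rw [h1, ← hAcdef]
        exact le_iSup₂ (f := fun k (_ : k ∈ spectrum ℂ Ac) => (‖k‖₊ : ENNReal)) _ hrspec
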